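/- Every recognizable birecurrent set S ⊆ A* is completely reducible over ℚ, i.e. the syntactic representation of its characteristic series is a direct sum of irreducible representations. -/

import Mathlib

namespace Birec

variable {A : Type*}

/-- The left quotient `u⁻¹S = {v | u v ∈ S}`. -/
def leftQuot (S : Set (List A)) (u : List A) : Set (List A) := {v | u ++ v ∈ S}

/-- A language is recognizable iff it has finitely many left quotients (Nerode). -/
def Recognizable (S : Set (List A)) : Prop := (Set.range (leftQuot S)).Finite

/-- The reversal `S̃` of a language. -/
def langRev (S : Set (List A)) : Set (List A) := {w | w.reverse ∈ S}

/-- A recognizable set is recurrent if its minimal automaton (whose states are the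
nonempty left quotients) is strongly connected. -/
def Recurrent (S : Set (List A)) : Prop :=
  Recognizable S ∧
    ∀ u v : List A, (leftQuot S u).Nonempty → (leftQuot S v).Nonempty →
      ∃ w : List A, leftQuot S (u ++ w) = leftQuot S v

/-- A set is birecurrent if it is recurrent together with its reversal. -/
def Birecurrent (S : Set (List A)) : Prop := Recurrent S ∧ Recurrent (langRev S)

/-- A set is dense if every word is a factor of one of its words. -/
def LangDense (S : Set (List A)) : Prop := ∀ v : List A, ∃ u w : List A, u ++ v ++ w ∈ S

end Birec
namespace Birec

variable {A : Type*}

/-- The characteristic series of a language, as a function `A* → ℚ`. -/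
noncomputable def charFun (S : Set (List A)) : List A → ℚ := S.indicator 1

/-- The shift operator `τ ↦ τ · u`, where `(τ · u)(v) = τ(u v)`; this is the linear
action underlying the syntactic representation. -/
def shiftOp (u : List A) : (List A → ℚ) →ₗ[ℚ] (List A → ℚ) where
  toFun τ := fun v => τ (u ++ v)
  map_add' := fun _ _ => rfl
  map_smul' := fun _ _ => rfl

/-- The syntactic space of a series `σ`: the subspace of `ℚ⟨⟨A⟩⟩` spanned by the
series `σ · u` for `u ∈ A*`. -/
def synSpace (σ : List A → ℚ) : Submodule ℚ (List A → ℚ) :=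
  Submodule.span ℚ (Set.range fun u : List A => shiftOp u σ)

/-- A subspace is invariant if it is stable under all shift operators. -/
def InvariantSub (W : Submodule ℚ (List A → ℚ)) : Prop :=
  ∀ τ ∈ W, ∀ u : List A, shiftOp u τ ∈ W

/-- An invariant subspace is irreducible if it is nonzero and has no nontrivial
invariant subspace. -/
def IrreducibleSub (W : Submodule ℚ (List A → ℚ)) : Prop :=
  W ≠ ⊥ ∧ ∀ W' : Submodule ℚ (List A → ℚ), W' ≤ W → InvariantSub W' → W' = ⊥ ∨ W' = W

/-- A series is completely reducible if its syntactic space is a direct sum of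
invariant irreducible subspaces (equivalently, its syntactic representation is a
direct sum of irreducible representations). -/
def CompletelyReducibleSeries (σ : List A → ℚ) : Prop :=
  ∃ (n : ℕ) (W : Fin n → Submodule ℚ (List A → ℚ)),
    (∀ i, W i ≤ synSpace σ ∧ InvariantSub (W i) ∧ IrreducibleSub (W i)) ∧
    iSupIndep W ∧ (⨆ i, W i) = synSpace σ

/-- A language is completely reducible if its characteristic series is. -/
noncomputable def CompletelyReducibleLang (S : Set (List A)) : Prop :=
  CompletelyReducibleSeries (charFun S)

/-- The rank of the element `ψ_σ(u)` of the syntactic monoid, i.e. the dimension of the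
image of the syntactic space under the shift by `u`. -/
noncomputable def psiRank (σ : List A → ℚ) (u : List A) : ℕ :=
  Module.finrank ℚ ↥(Submodule.map (shiftOp u) (synSpace σ))

/-- `u` induces an element of minimal nonzero rank of the syntactic monoid. -/
def IsMinNonzeroPsiRank (σ : List A → ℚ) (u : List A) : Prop :=
  psiRank σ u ≠ 0 ∧ ∀ v : List A, psiRank σ v ≠ 0 → psiRank σ u ≤ psiRank σ v

/-- The eventual kernel `EK(S)`: the intersection (inside the syntactic space) of the
kernels of all elements of minimal nonzero rank of the syntactic monoid. -/
noncomputable def EK (S : Set (List A)) : Submodule ℚ (List A → ℚ) :=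
  synSpace (charFun S) ⊓
    ⨅ u ∈ {u : List A | IsMinNonzeroPsiRank (charFun S) u}, LinearMap.ker (shiftOp u)

/-- The eventual range `ER(S)`: the subspace spanned by the images of all elements of
minimal nonzero rank of the syntactic monoid. -/
noncomputable def ER (S : Set (List A)) : Submodule ℚ (List A → ℚ) :=
  ⨆ u ∈ {u : List A | IsMinNonzeroPsiRank (charFun S) u},
    Submodule.map (shiftOp u) (synSpace (charFun S))

end Birec


namespace Birec


variable {A : Type*}

/-! ### Basic lemmas on `shiftOp`, `leftQuot`, `charFun` -/

theorem shiftOp_apply (u : List A) (τ : List A → ℚ) (v : List A) :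
    shiftOp u τ v = τ (u ++ v) := rfl

theorem shiftOp_shiftOp (u w : List A) (τ : List A → ℚ) :
    shiftOp w (shiftOp u τ) = shiftOp (u ++ w) τ := by
  funext v; simp [shiftOp_apply, List.append_assoc]

theorem mem_leftQuot {S : Set (List A)} {u v : List A} :
    v ∈ leftQuot S u ↔ u ++ v ∈ S := Iff.rfl

theorem leftQuot_append (S : Set (List A)) (u w : List A) :
    leftQuot S (u ++ w) = {v | w ++ v ∈ leftQuot S u} := by
  ext v; simp [leftQuot, List.append_assoc]

theorem leftQuot_congr_append {S : Set (List A)} {u u' : List A}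
    (h : leftQuot S u = leftQuot S u') (w : List A) :
    leftQuot S (u ++ w) = leftQuot S (u' ++ w) := by
  rw [leftQuot_append, leftQuot_append, h]

theorem leftQuot_nonempty_of_append {S : Set (List A)} {u w : List A}
    (h : (leftQuot S (u ++ w)).Nonempty) : (leftQuot S u).Nonempty := by
  obtain ⟨v, hv⟩ := h
  exact ⟨w ++ v, by simpa [mem_leftQuot, List.append_assoc] using hv⟩

noncomputable def xq (S : Set (List A)) (u : List A) : List A → ℚ :=
  shiftOp u (charFun S)

theorem xq_apply_mem {S : Set (List A)} {u v : List A} (h : u ++ v ∈ S) :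
    xq S u v = 1 := by
  simp only [xq, shiftOp_apply, charFun]
  rw [Set.indicator_of_mem h]; rfl

theorem xq_apply_not_mem {S : Set (List A)} {u v : List A} (h : u ++ v ∉ S) :
    xq S u v = 0 := by
  simp only [xq, shiftOp_apply, charFun]
  rw [Set.indicator_of_notMem h]

theorem xq_eq_of_iff {S : Set (List A)} {u u' : List A}
    (h : ∀ v, u ++ v ∈ S ↔ u' ++ v ∈ S) : xq S u = xq S u' := by
  funext v
  by_cases hv : u ++ v ∈ S
  · rw [xq_apply_mem hv, xq_apply_mem ((h v).1 hv)]
  · rw [xq_apply_not_mem hv, xq_apply_not_mem (fun hc => hv ((h v).2 hc))]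

theorem xq_eq_of_leftQuot_eq {S : Set (List A)} {u u' : List A}
    (h : leftQuot S u = leftQuot S u') : xq S u = xq S u' := by
  apply xq_eq_of_iff
  intro v
  constructor
  · intro hv; exact (h ▸ (mem_leftQuot.2 hv) : v ∈ leftQuot S u')
  · intro hv; exact (h.symm ▸ (mem_leftQuot.2 hv) : v ∈ leftQuot S u)

theorem shiftOp_xq (S : Set (List A)) (u w : List A) :
    shiftOp w (xq S u) = xq S (u ++ w) := shiftOp_shiftOp u w _

theorem xq_ne_zero_iff {S : Set (List A)} {u : List A} :
    xq S u ≠ 0 ↔ (leftQuot S u).Nonempty := by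
  constructor
  · intro h
    by_contra hne
    apply h; funext v
    exact xq_apply_not_mem (fun hv => hne ⟨v, mem_leftQuot.2 hv⟩)
  · rintro ⟨v, hv⟩ h0
    have := congrFun h0 v
    rw [xq_apply_mem (mem_leftQuot.1 hv)] at this
    exact one_ne_zero this

theorem xq_mem_synSpace (S : Set (List A)) (u : List A) :
    xq S u ∈ synSpace (charFun S) :=
  Submodule.subset_span ⟨u, rfl⟩

/-! ### The syntactic space is invariant; restricted operators -/

theorem synSpace_stable (σ : List A → ℚ) (u : List A) :
    ∀ τ ∈ synSpace σ, shiftOp u τ ∈ synSpace σ := by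
  intro τ hτ
  induction hτ using Submodule.span_induction with
  | mem x hx =>
      obtain ⟨w, rfl⟩ := hx
      rw [shiftOp_shiftOp]
      exact Submodule.subset_span ⟨w ++ u, rfl⟩
  | zero => simpa using Submodule.zero_mem _
  | add x y _ _ hx hy => simpa using Submodule.add_mem _ hx hy
  | smul c x _ hx => simpa using Submodule.smul_mem _ c hx

noncomputable def psi (σ : List A → ℚ) (u : List A) :
    Module.End ℚ ↥(synSpace σ) :=
  (shiftOp u).restrict (synSpace_stable σ u)

theorem psi_coe (σ : List A → ℚ) (u : List A) (x : ↥(synSpace σ)) :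
    (psi σ u x : List A → ℚ) = shiftOp u (x : List A → ℚ) := rfl

theorem psi_apply_apply (σ : List A → ℚ) (u : List A) (x : ↥(synSpace σ)) (v : List A) :
    (psi σ u x : List A → ℚ) v = (x : List A → ℚ) (u ++ v) := rfl

theorem psi_psi (σ : List A → ℚ) (u w : List A) (x : ↥(synSpace σ)) :
    psi σ w (psi σ u x) = psi σ (u ++ w) x := by
  apply Subtype.ext
  rw [psi_coe, psi_coe, psi_coe, shiftOp_shiftOp]

theorem psi_comp (σ : List A → ℚ) (u w : List A) :
    (psi σ w) ∘ₗ (psi σ u) = psi σ (u ++ w) := by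
  ext x; exact congrFun (congrArg _ (psi_psi σ u w x)) _

theorem psi_nil (σ : List A → ℚ) : psi σ [] = LinearMap.id := by
  ext x; rfl

theorem psi_congr_right (σ : List A → ℚ) {a b : List A} (h : psi σ a = psi σ b)
    (c : List A) : psi σ (a ++ c) = psi σ (b ++ c) := by
  rw [← psi_comp, ← psi_comp, h]

theorem psi_congr_left (σ : List A → ℚ) {a b : List A} (h : psi σ a = psi σ b)
    (c : List A) : psi σ (c ++ a) = psi σ (c ++ b) := by
  rw [← psi_comp, ← psi_comp, h]

noncomputable def xqs (S : Set (List A)) (u : List A) : ↥(synSpace (charFun S)) :=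
  ⟨xq S u, xq_mem_synSpace S u⟩

theorem psi_xqs (S : Set (List A)) (u w : List A) :
    psi (charFun S) w (xqs S u) = xqs S (u ++ w) := by
  apply Subtype.ext
  rw [psi_coe]; exact shiftOp_xq S u w

theorem span_xqs_eq_top (S : Set (List A)) :
    Submodule.span ℚ (Set.range (xqs S)) = ⊤ := by
  apply Submodule.map_injective_of_injective (Submodule.injective_subtype (synSpace (charFun S)))
  rw [Submodule.map_span, Submodule.map_top, Submodule.range_subtype]
  congr 1
  rw [← Set.range_comp]
  rfl


/-! ### Word powers -/

def wpow (z : List A) : ℕ → List A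
  | 0 => []
  | k + 1 => z ++ wpow z k

theorem wpow_add (z : List A) (a b : ℕ) :
    wpow z (a + b) = wpow z a ++ wpow z b := by
  induction a with
  | zero => simp [wpow]
  | succ a ih =>
      have : a + 1 + b = (a + b) + 1 := by omega
      rw [this]
      simp [wpow, ih, List.append_assoc]

/-! ### Evaluation lemmas -/

theorem eval_zero_of {σ : List A → ℚ} {t : List A}
    (h : ∀ u : List A, shiftOp u σ t = 0) :
    ∀ τ ∈ synSpace σ, τ t = 0 := by
  intro τ hτ
  have hle : synSpace σ ≤ LinearMap.ker (LinearMap.proj t (R := ℚ) (φ := fun _ : List A => ℚ)) := by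
    rw [synSpace, Submodule.span_le]
    rintro x ⟨u, rfl⟩
    exact h u
  exact hle hτ

theorem eval_eq_of {σ : List A → ℚ} {t₁ t₂ : List A}
    (h : ∀ u : List A, shiftOp u σ t₁ = shiftOp u σ t₂) :
    ∀ τ ∈ synSpace σ, τ t₁ = τ t₂ := by
  intro τ hτ
  have hle : synSpace σ ≤ LinearMap.ker
      ((LinearMap.proj t₁ (R := ℚ) (φ := fun _ : List A => ℚ)) -
        (LinearMap.proj t₂ (R := ℚ) (φ := fun _ : List A => ℚ))) := by
    rw [synSpace, Submodule.span_le]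
    rintro x ⟨u, rfl⟩
    simp only [SetLike.mem_coe, LinearMap.mem_ker, LinearMap.sub_apply, LinearMap.proj_apply]
    rw [h u]; ring
  have := hle hτ
  simpa [sub_eq_zero] using this

/-! ### Finite dimensionality -/

theorem xq_eq_indicator (S : Set (List A)) (u : List A) :
    xq S u = (leftQuot S u).indicator 1 := by
  funext v
  by_cases h : u ++ v ∈ S
  · rw [xq_apply_mem h, Set.indicator_of_mem (mem_leftQuot.2 h)]; rfl
  · rw [xq_apply_not_mem h, Set.indicator_of_notMem (fun hc => h (mem_leftQuot.1 hc))]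

theorem synSpace_fd {S : Set (List A)} (hS : Recognizable S) :
    FiniteDimensional ℚ ↥(synSpace (charFun S)) := by
  have hsub : Set.range (fun u : List A => shiftOp u (charFun S)) ⊆
      (fun q : Set (List A) => q.indicator (1 : List A → ℚ)) '' Set.range (leftQuot S) := by
    rintro x ⟨u, rfl⟩
    exact ⟨leftQuot S u, ⟨u, rfl⟩, (xq_eq_indicator S u).symm⟩
  exact FiniteDimensional.span_of_finite ℚ ((hS.image _).subset hsub)

/-! ### Finiteness of the transition monoid -/

theorem psi_eq_of_leftQuot_eq {S : Set (List A)} {w w' : List A}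
    (h : ∀ u : List A, leftQuot S (u ++ w) = leftQuot S (u ++ w')) :
    psi (charFun S) w = psi (charFun S) w' := by
  apply LinearMap.ext_on (span_xqs_eq_top S)
  rintro x ⟨u, rfl⟩
  rw [psi_xqs, psi_xqs]
  exact Subtype.ext (xq_eq_of_leftQuot_eq (h u))

theorem psi_range_finite {S : Set (List A)} (hS : Recognizable S) :
    (Set.range (psi (charFun S))).Finite := by
  classical
  set Q := Set.range (leftQuot S) with hQ
  have hQfin : Q.Finite := hS
  haveI : Finite ↥Q := hQfin.to_subtype
  -- transition function on quotients
  have hmem : ∀ (q : ↥Q) (w : List A), {v | w ++ v ∈ (q : Set (List A))} ∈ Q := by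
    rintro ⟨q, ⟨u, rfl⟩⟩ w
    exact ⟨u ++ w, by rw [leftQuot_append]⟩
  set Φ : List A → (↥Q → ↥Q) := fun w q => ⟨{v | w ++ v ∈ (q : Set (List A))}, hmem q w⟩ with hΦ
  have hdet : ∀ w w', Φ w = Φ w' → psi (charFun S) w = psi (charFun S) w' := by
    intro w w' h
    apply psi_eq_of_leftQuot_eq
    intro u
    have := congrFun h ⟨leftQuot S u, ⟨u, rfl⟩⟩
    have h2 := congrArg Subtype.val this
    rw [leftQuot_append, leftQuot_append]
    exact h2
  set lift : (↥Q → ↥Q) → Module.End ℚ ↥(synSpace (charFun S)) :=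
    fun f => if h : ∃ w, Φ w = f then psi (charFun S) h.choose else 0 with hlift
  have hfact : ∀ w, psi (charFun S) w = lift (Φ w) := by
    intro w
    rw [hlift]
    simp only
    rw [dif_pos ⟨w, rfl⟩]
    exact (hdet _ _ ((⟨w, rfl⟩ : ∃ w', Φ w' = Φ w).choose_spec)).symm
  have : Set.range (psi (charFun S)) ⊆ Set.range lift := by
    rintro x ⟨w, rfl⟩
    exact ⟨Φ w, (hfact w).symm⟩
  exact (Set.finite_range lift).subset this

/-! ### Rank -/

noncomputable def rho (σ : List A → ℚ) (u : List A) : ℕ :=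
  Module.finrank ℚ ↥(LinearMap.range (psi σ u))

theorem range_psi_append (σ : List A → ℚ) (u w : List A) :
    LinearMap.range (psi σ (u ++ w)) =
      Submodule.map (psi σ w) (LinearMap.range (psi σ u)) := by
  rw [← psi_comp, LinearMap.range_comp]

theorem rho_append_le_left (σ : List A → ℚ) [FiniteDimensional ℚ ↥(synSpace σ)]
    (u w : List A) : rho σ (u ++ w) ≤ rho σ u := by
  rw [rho, rho, range_psi_append]
  exact Submodule.finrank_map_le _ _

theorem rho_append_le_right (σ : List A → ℚ) [FiniteDimensional ℚ ↥(synSpace σ)]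
    (u w : List A) : rho σ (u ++ w) ≤ rho σ w := by
  rw [rho, rho, ← psi_comp]
  exact Submodule.finrank_mono (LinearMap.range_comp_le_range _ _)

theorem rho_eq_zero_iff (σ : List A → ℚ) [FiniteDimensional ℚ ↥(synSpace σ)]
    (u : List A) : rho σ u = 0 ↔ psi σ u = 0 := by
  rw [rho, Submodule.finrank_eq_zero, LinearMap.range_eq_bot]

/-! ### More helpers -/

theorem charFun_eq_of_iff {S : Set (List A)} {a b : List A} (h : a ∈ S ↔ b ∈ S) :
    charFun S a = charFun S b := by
  by_cases ha : a ∈ S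
  · rw [charFun, Set.indicator_of_mem ha, Set.indicator_of_mem (h.1 ha)]; rfl
  · rw [charFun, Set.indicator_of_notMem ha,
      Set.indicator_of_notMem (fun hb => ha (h.2 hb))]

theorem charFun_not_mem {S : Set (List A)} {a : List A} (h : a ∉ S) :
    charFun S a = 0 := Set.indicator_of_notMem h _

theorem xq_eq_zero_of_not_nonempty {S : Set (List A)} {u : List A}
    (h : ¬ (leftQuot S u).Nonempty) : xq S u = 0 := by
  by_contra hne
  exact h (xq_ne_zero_iff.mp hne)

theorem exists_nonempty_quot_of_psi_ne_zero {S : Set (List A)} {u : List A}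
    (h : psi (charFun S) u ≠ 0) : ∃ t, (leftQuot S (t ++ u)).Nonempty := by
  by_contra hc
  push_neg at hc
  apply h
  apply LinearMap.ext_on (span_xqs_eq_top S)
  rintro x ⟨t, rfl⟩
  rw [psi_xqs]
  apply Subtype.ext
  show xq S (t ++ u) = 0
  exact xq_eq_zero_of_not_nonempty (by rw [hc t]; exact Set.not_nonempty_empty)

/-! ### From an internal decomposition to the external statement -/

theorem internal_to_external (σ : List A → ℚ)
    (h : ∃ (n : ℕ) (p : Fin n → Submodule ℚ ↥(synSpace σ)),
      (∀ i, (∀ u, ∀ x ∈ p i, psi σ u x ∈ p i) ∧ p i ≠ ⊥ ∧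
        ∀ q ≤ p i, (∀ u, ∀ x ∈ q, psi σ u x ∈ q) → q = ⊥ ∨ q = p i) ∧
      iSupIndep p ∧ (⨆ i, p i) = ⊤) :
    CompletelyReducibleSeries σ := by
  obtain ⟨n, p, hp, hind, htop⟩ := h
  set j := (synSpace σ).subtype with hj
  have hjinj : Function.Injective j := Submodule.injective_subtype _
  have hshift : ∀ (u : List A) (x : ↥(synSpace σ)), shiftOp u (j x) = j (psi σ u x) :=
    fun u x => rfl
  have hmaple : ∀ pp : Submodule ℚ ↥(synSpace σ), Submodule.map j pp ≤ synSpace σ := by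
    rintro pp x ⟨y, hy, rfl⟩; exact y.2
  refine ⟨n, fun i => Submodule.map j (p i), fun i => ⟨?_, ?_, ?_, ?_⟩, ?_, ?_⟩
  · exact hmaple (p i)
  · -- invariance
    rintro τ hτ u
    obtain ⟨x, hx, rfl⟩ := hτ
    rw [hshift u x]
    exact Submodule.mem_map_of_mem ((hp i).1 u x hx)
  · -- nonzero
    intro hbot
    have hbot' : Submodule.map j (p i) = ⊥ := hbot
    apply (hp i).2.1
    apply Submodule.map_injective_of_injective hjinj
    rw [hbot', Submodule.map_bot]
  · -- irreducibility
    intro W' hle hWinv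
    set q : Submodule ℚ ↥(synSpace σ) := Submodule.comap j W' with hq
    have hqle : q ≤ p i := by
      intro x hx
      obtain ⟨y, hy, hxy⟩ := hle hx
      rwa [← hjinj hxy]
    have hqinv : ∀ u, ∀ x ∈ q, psi σ u x ∈ q := by
      intro u x hx
      have : shiftOp u (j x) ∈ W' := hWinv (j x) hx u
      rwa [hshift u x] at this
    have hmapq : Submodule.map j q = W' := by
      rw [hq, Submodule.map_comap_subtype]
      apply inf_eq_right.mpr
      exact le_trans hle (hmaple (p i))
    rcases (hp i).2.2 q hqle hqinv with h0 | heq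
    · left; rw [← hmapq, h0, Submodule.map_bot]
    · right; rw [← hmapq, heq]
  · -- independence
    intro i
    rw [disjoint_iff]
    have h1 : (⨆ k, ⨆ (_ : k ≠ i), Submodule.map j (p k)) =
        Submodule.map j (⨆ k, ⨆ (_ : k ≠ i), p k) := by
      rw [Submodule.map_iSup]
      congr 1
      funext k
      rw [Submodule.map_iSup]
    rw [h1, ← Submodule.map_inf j hjinj, (disjoint_iff.mp (hind i)), Submodule.map_bot]
  · rw [← Submodule.map_iSup, htop, Submodule.map_top, Submodule.range_subtype]



section Abstract

variable {V : Type*} [AddCommGroup V] [Module ℚ V]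

/-! ### Existence of minimal submodules with a property -/

theorem exists_minimal_submodule [FiniteDimensional ℚ V]
    (P : Submodule ℚ V → Prop) :
    ∀ Y₀ : Submodule ℚ V, P Y₀ → Y₀ ≠ ⊥ →
      ∃ Y, Y ≤ Y₀ ∧ P Y ∧ Y ≠ ⊥ ∧ ∀ Z, P Z → Z ≠ ⊥ → Z ≤ Y → Z = Y := by
  have main : ∀ n : ℕ, ∀ Y₀ : Submodule ℚ V, Module.finrank ℚ ↥Y₀ ≤ n → P Y₀ → Y₀ ≠ ⊥ →
      ∃ Y, Y ≤ Y₀ ∧ P Y ∧ Y ≠ ⊥ ∧ ∀ Z, P Z → Z ≠ ⊥ → Z ≤ Y → Z = Y := by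
    intro n
    induction n with
    | zero =>
        intro Y₀ hle hP hne
        exact absurd (Submodule.finrank_eq_zero.mp (Nat.le_zero.mp hle)) hne
    | succ n ih =>
        intro Y₀ hle hP hne
        by_cases h : ∀ Z, P Z → Z ≠ ⊥ → Z ≤ Y₀ → Z = Y₀
        · exact ⟨Y₀, le_refl _, hP, hne, h⟩
        · push_neg at h
          obtain ⟨Z, hPZ, hZne, hZle, hZne'⟩ := h
          have hlt : Module.finrank ℚ ↥Z < Module.finrank ℚ ↥Y₀ :=
            Submodule.finrank_lt_finrank_of_lt (lt_of_le_of_ne hZle hZne')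
          obtain ⟨Y, hY1, hY2, hY3, hY4⟩ := ih Z (by omega) hPZ hZne
          exact ⟨Y, le_trans hY1 hZle, hY2, hY3, hY4⟩
  intro Y₀ hP hne
  exact main (Module.finrank ℚ ↥Y₀) Y₀ le_rfl hP hne

/-! ### Extraction of an independent decomposition from a sum of simples -/

theorem extract_independent [FiniteDimensional ℚ V]
    (Inv : Submodule ℚ V → Prop)
    (hInf : ∀ p q, Inv p → Inv q → Inv (p ⊓ q))
    (hSup : ∀ {ι : Type} (f : ι → Submodule ℚ V), (∀ i, Inv (f i)) → Inv (⨆ i, f i))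
    {ι : Type*} (Y : ι → Submodule ℚ V)
    (hY : ∀ i, Inv (Y i) ∧ Y i ≠ ⊥ ∧ ∀ q ≤ Y i, Inv q → q = ⊥ ∨ q = Y i)
    (htop : (⨆ i, Y i) = ⊤) :
    ∃ (n : ℕ) (p : Fin n → Submodule ℚ V),
      (∀ i, Inv (p i) ∧ p i ≠ ⊥ ∧ ∀ q ≤ p i, Inv q → q = ⊥ ∨ q = p i) ∧
      iSupIndep p ∧ (⨆ i, p i) = ⊤ := by
  classical
  set PP : Submodule ℚ V → Prop :=
    fun p => Inv p ∧ p ≠ ⊥ ∧ ∀ q ≤ p, Inv q → q = ⊥ ∨ q = p with hPP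
  -- top is compact, extract finite subfamily
  have hfg : (⊤ : Submodule ℚ V).FG := Module.finite_def.mp inferInstance
  have hcompact := (Submodule.fg_iff_compact _).mp hfg
  obtain ⟨s, hs⟩ := CompleteLattice.IsCompactElement.exists_finset_of_le_iSup _ hcompact Y (le_of_eq htop.symm)
  set t₀ : Finset (Submodule ℚ V) := s.image Y with ht₀
  have ht₀P : ∀ p ∈ t₀, PP p := by
    intro p hp
    obtain ⟨i, _, rfl⟩ := Finset.mem_image.mp hp
    exact hY i
  have ht₀top : t₀.sup id = ⊤ := by
    apply le_antisymm le_top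
    refine le_trans hs ?_
    refine iSup_le fun i => iSup_le fun hi => ?_
    exact Finset.le_sup (f := id) (Finset.mem_image_of_mem Y hi)
  -- minimalize
  have hmin : ∀ N : ℕ, ∀ t : Finset (Submodule ℚ V), t.card ≤ N →
      (∀ p ∈ t, PP p) → t.sup id = ⊤ →
      ∃ t' : Finset (Submodule ℚ V), (∀ p ∈ t', PP p) ∧ t'.sup id = ⊤ ∧
        ∀ p ∈ t', ¬ p ≤ (t'.erase p).sup id := by
    intro N
    induction N with
    | zero =>
        intro t hcard hPt htop'
        refine ⟨t, hPt, htop', ?_⟩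
        intro p hp
        have : t = ∅ := Finset.card_eq_zero.mp (Nat.le_zero.mp hcard)
        simp [this] at hp
    | succ N ih =>
        intro t hcard hPt htop'
        by_cases h : ∃ p ∈ t, p ≤ (t.erase p).sup id
        · obtain ⟨p, hp, hple⟩ := h
          have hsup : (t.erase p).sup id = t.sup id := by
            conv_rhs => rw [← Finset.insert_erase hp]
            rw [Finset.sup_insert]
            exact (sup_eq_right.mpr hple).symm
          have hcard' : (t.erase p).card ≤ N := by
            have := Finset.card_erase_lt_of_mem hp
            omega
          exact ih (t.erase p) hcard' (fun q hq => hPt q (Finset.mem_of_mem_erase hq))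
            (hsup.trans htop')
        · push_neg at h
          exact ⟨t, hPt, htop', h⟩
  obtain ⟨t', ht'P, ht'top, ht'min⟩ := hmin t₀.card t₀ le_rfl ht₀P ht₀top
  -- convert to Fin n family
  refine ⟨t'.card, fun i => (t'.equivFin.symm i : Submodule ℚ V), ?_, ?_, ?_⟩
  · intro i
    exact ht'P _ (t'.equivFin.symm i).2
  · intro i
    rw [disjoint_iff]
    set q := (↑(t'.equivFin.symm i) : Submodule ℚ V) ⊓
      (⨆ j, ⨆ (_ : j ≠ i), (↑(t'.equivFin.symm j) : Submodule ℚ V)) with hq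
    have hsub : (⨆ j, ⨆ (_ : j ≠ i), (↑(t'.equivFin.symm j) : Submodule ℚ V)) =
        ⨆ x : {j : Fin t'.card // j ≠ i}, (↑(t'.equivFin.symm ↑x) : Submodule ℚ V) :=
      iSup_subtype' (p := fun j : Fin t'.card => j ≠ i)
        (f := fun j _ => (↑(t'.equivFin.symm j) : Submodule ℚ V))
    have hInvq : Inv q := by
      rw [hq, hsub]
      exact hInf _ _ ((ht'P _ (t'.equivFin.symm i).2).1)
        (hSup (ι := {j : Fin t'.card // j ≠ i})
          (fun x => (↑(t'.equivFin.symm ↑x) : Submodule ℚ V))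
          (fun x => (ht'P _ (t'.equivFin.symm ↑x).2).1))
    have hqle : q ≤ ↑(t'.equivFin.symm i) := inf_le_left
    rcases (ht'P _ (t'.equivFin.symm i).2).2.2 q hqle hInvq with h0 | heq
    · exact h0
    · exfalso
      apply ht'min _ (t'.equivFin.symm i).2
      calc (↑(t'.equivFin.symm i) : Submodule ℚ V)
          = q := heq.symm
        _ ≤ ⨆ j, ⨆ (_ : j ≠ i), (↑(t'.equivFin.symm j) : Submodule ℚ V) := inf_le_right
        _ ≤ (t'.erase ↑(t'.equivFin.symm i)).sup id := by
            refine iSup_le fun j => iSup_le fun hji => ?_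
            refine Finset.le_sup (f := id) ?_
            rw [Finset.mem_erase]
            refine ⟨?_, (t'.equivFin.symm j).2⟩
            intro hc
            exact hji (t'.equivFin.symm.injective (Subtype.coe_injective hc) )
  · apply le_antisymm
    · refine iSup_le fun i => ?_
      rw [← ht'top]
      exact Finset.le_sup (f := id) (t'.equivFin.symm i).2
    · rw [← ht'top]
      refine Finset.sup_le fun p hp => ?_
      have : p = ↑(t'.equivFin.symm (t'.equivFin ⟨p, hp⟩)) := by simp
      rw [this]
      exact le_iSup (fun i => (↑(t'.equivFin.symm i) : Submodule ℚ V)) _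

end Abstract



section Maschke

variable {V : Type*} [AddCommGroup V] [Module ℚ V] [FiniteDimensional ℚ V]

/-- Maschke-type averaging in the corner of a "finite-group-like" set of operators:
`G` is a finite set of endomorphisms with a common two-sided identity `e`, closed under
composition, with inverses relative to `e`.  Every `G`-stable subspace of
`W := range e` has a `G`-stable complement inside `W`. -/
theorem corner_maschke
    (G : Set (Module.End ℚ V)) (hGfin : G.Finite)
    (e : Module.End ℚ V) (heG : e ∈ G)
    (habs : ∀ f ∈ G, f ∘ₗ e = f ∧ e ∘ₗ f = f)
    (hclosed : ∀ f ∈ G, ∀ g ∈ G, f ∘ₗ g ∈ G)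
    (hinv : ∀ f ∈ G, ∃ f' ∈ G, f' ∘ₗ f = e ∧ f ∘ₗ f' = e)
    (Y : Submodule ℚ V) (hYW : Y ≤ LinearMap.range e)
    (hYstab : ∀ f ∈ G, ∀ y ∈ Y, f y ∈ Y) :
    ∃ C : Submodule ℚ V, C ≤ LinearMap.range e ∧ (∀ f ∈ G, ∀ x ∈ C, f x ∈ C) ∧
      Y ⊓ C = ⊥ ∧ Y ⊔ C = LinearMap.range e := by
  classical
  set W : Submodule ℚ V := LinearMap.range e with hW
  -- e is the identity on W
  have hee : e ∘ₗ e = e := (habs e heG).1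
  have hefix : ∀ x ∈ W, e x = x := by
    rintro x ⟨y, rfl⟩
    exact DFunLike.congr_fun hee y
  -- every element of G has range exactly W
  have hrange : ∀ f ∈ G, LinearMap.range f = W := by
    intro f hf
    apply le_antisymm
    · rw [← (habs f hf).2]
      exact LinearMap.range_comp_le_range _ _
    · obtain ⟨f', _, _, hff'⟩ := hinv f hf
      rw [hW, ← hff']
      exact LinearMap.range_comp_le_range _ _
  -- the inverse function
  set invF : Module.End ℚ V → Module.End ℚ V :=
    fun f => if h : f ∈ G then (hinv f h).choose else 0 with hinvF
  have hinvF_mem : ∀ f ∈ G, invF f ∈ G := by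
    intro f hf; rw [hinvF]; simp only [dif_pos hf]
    exact (hinv f hf).choose_spec.1
  have hinvF_left : ∀ f ∈ G, invF f ∘ₗ f = e := by
    intro f hf; rw [hinvF]; simp only [dif_pos hf]
    exact (hinv f hf).choose_spec.2.1
  have hinvF_right : ∀ f ∈ G, f ∘ₗ invF f = e := by
    intro f hf; rw [hinvF]; simp only [dif_pos hf]
    exact (hinv f hf).choose_spec.2.2
  -- projection onto Y
  obtain ⟨D, hD⟩ := Submodule.exists_isCompl Y
  set π₀ : Module.End ℚ V := Y.subtype ∘ₗ Y.projectionOnto D hD with hπ₀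
  have hπ₀mem : ∀ x : V, π₀ x ∈ Y := fun x => (Y.projectionOnto D hD x).2
  have hπ₀fix : ∀ y ∈ Y, π₀ y = y := by
    intro y hy
    rw [hπ₀]
    simp only [LinearMap.comp_apply, Submodule.coe_subtype]
    rw [Submodule.projectionOnto_apply_left hD ⟨y, hy⟩]
  -- the averaging operator
  set GF : Finset (Module.End ℚ V) := hGfin.toFinset with hGF
  have hmemGF : ∀ f, f ∈ GF ↔ f ∈ G := by intro f; rw [hGF]; exact Set.Finite.mem_toFinset _
  have hcard : (GF.card : ℚ) ≠ 0 := by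
    have h1 : e ∈ GF := (hmemGF e).2 heG
    have h2 : 0 < GF.card := Finset.card_pos.2 ⟨e, h1⟩
    exact_mod_cast Nat.pos_iff_ne_zero.mp h2
  set avg : Module.End ℚ V :=
    (GF.card : ℚ)⁻¹ • ∑ f ∈ GF, (invF f) ∘ₗ (π₀ ∘ₗ f) with havg
  have havg_apply : ∀ x : V, avg x = (GF.card : ℚ)⁻¹ • ∑ f ∈ GF, invF f (π₀ (f x)) := by
    intro x
    rw [havg, LinearMap.smul_apply, LinearMap.sum_apply]
    rfl
  -- P1 : range avg ⊆ Y
  have hP1 : ∀ x : V, avg x ∈ Y := by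
    intro x
    rw [havg_apply]
    refine Submodule.smul_mem _ _ (Submodule.sum_mem _ fun f hf => ?_)
    exact hYstab (invF f) (hinvF_mem f ((hmemGF f).1 hf)) _ (hπ₀mem _)
  -- P2 : avg fixes Y
  have hP2 : ∀ y ∈ Y, avg y = y := by
    intro y hy
    rw [havg_apply]
    have hterm : ∀ f ∈ GF, invF f (π₀ (f y)) = y := by
      intro f hf
      have hfG := (hmemGF f).1 hf
      have h1 : f y ∈ Y := hYstab f hfG y hy
      rw [hπ₀fix _ h1]
      have h2 : invF f (f y) = (invF f ∘ₗ f) y := rfl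
      rw [h2, hinvF_left f hfG]
      exact hefix y (hYW hy)
    rw [Finset.sum_congr rfl hterm, Finset.sum_const]
    rw [← Nat.cast_smul_eq_nsmul ℚ, smul_smul, inv_mul_cancel₀ hcard, one_smul]
  -- P3 : equivariance on W
  have hP3 : ∀ g ∈ G, ∀ x ∈ W, avg (g x) = g (avg x) := by
    intro g hg x hx
    rw [havg_apply, havg_apply, map_smul, map_sum]
    congr 1
    refine Finset.sum_bij' (fun f _ => f ∘ₗ g) (fun f _ => f ∘ₗ invF g) ?_ ?_ ?_ ?_ ?_
    · intro f hf
      exact (hmemGF _).2 (hclosed f ((hmemGF f).1 hf) g hg)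
    · intro f hf
      exact (hmemGF _).2 (hclosed f ((hmemGF f).1 hf) (invF g) (hinvF_mem g hg))
    · intro f hf
      show (f ∘ₗ g) ∘ₗ invF g = f
      rw [LinearMap.comp_assoc, hinvF_right g hg]
      exact (habs f ((hmemGF f).1 hf)).1
    · intro f hf
      show (f ∘ₗ invF g) ∘ₗ g = f
      rw [LinearMap.comp_assoc, hinvF_left g hg]
      exact (habs f ((hmemGF f).1 hf)).1
    · intro f hf
      -- goal : invF f (π₀ (f (g x))) = g (invF (f ∘ₗ g) (π₀ ((f ∘ₗ g) x)))
      have hfG := (hmemGF f).1 hf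
      have hF : f ∘ₗ g ∈ G := hclosed f hfG g hg
      have harg : (f ∘ₗ g) x = f (g x) := rfl
      rw [harg]
      set y : V := π₀ (f (g x)) with hy
      have hyW : y ∈ W := hYW (hπ₀mem _)
      -- the maps invF f and g ∘ invF (f ∘ g) agree on W
      obtain ⟨x₀, hx₀⟩ : y ∈ LinearMap.range (f ∘ₗ g) := by rw [hrange _ hF]; exact hyW
      have h1 : invF f y = (invF f ∘ₗ (f ∘ₗ g)) x₀ := by rw [← hx₀]; rfl
      have h2 : g (invF (f ∘ₗ g) y) = ((g ∘ₗ invF (f ∘ₗ g)) ∘ₗ (f ∘ₗ g)) x₀ := by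
        rw [← hx₀]; rfl
      rw [h1, h2]
      have e1 : invF f ∘ₗ (f ∘ₗ g) = e ∘ₗ g := by
        rw [← LinearMap.comp_assoc, hinvF_left f hfG]
      have e2 : (g ∘ₗ invF (f ∘ₗ g)) ∘ₗ (f ∘ₗ g) = g ∘ₗ e := by
        rw [LinearMap.comp_assoc, hinvF_left _ hF]
      rw [e1, e2, (habs g hg).1, (habs g hg).2]
  -- the complement
  refine ⟨LinearMap.ker avg ⊓ W, inf_le_right, ?_, ?_, ?_⟩
  · intro f hf x hx
    obtain ⟨hxker, hxW⟩ := Submodule.mem_inf.mp hx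
    refine Submodule.mem_inf.mpr ⟨?_, ?_⟩
    · have h1 : avg (f x) = f (avg x) := hP3 f hf x hxW
      rw [LinearMap.mem_ker.mp hxker, map_zero] at h1
      exact LinearMap.mem_ker.mpr h1
    · rw [← hrange f hf]
      exact ⟨x, rfl⟩
  · rw [eq_bot_iff]
    intro x hx
    obtain ⟨hxY, hxC⟩ := Submodule.mem_inf.mp hx
    obtain ⟨hxker, -⟩ := Submodule.mem_inf.mp hxC
    have h0 := hP2 x hxY
    rw [LinearMap.mem_ker.mp hxker] at h0
    rw [← h0]; exact Submodule.zero_mem _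
  · apply le_antisymm
    · exact sup_le hYW inf_le_right
    · intro x hxW
      have h1 : avg x ∈ Y := hP1 x
      have h2 : x - avg x ∈ LinearMap.ker avg ⊓ W := by
        refine Submodule.mem_inf.mpr ⟨?_, ?_⟩
        · exact LinearMap.mem_ker.mpr (by rw [map_sub, hP2 _ h1, sub_self])
        · exact Submodule.sub_mem _ hxW (hYW h1)
      exact Submodule.mem_sup.2 ⟨avg x, h1, x - avg x, h2, by abel⟩

end Maschke



section Inverses

variable {V : Type*} [AddCommGroup V] [Module ℚ V]

/-- Iterated composition with seed `e`. -/
def cpow (f e : Module.End ℚ V) : ℕ → Module.End ℚ V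
  | 0 => e
  | k + 1 => f ∘ₗ cpow f e k

theorem corner_inverses
    (G : Set (Module.End ℚ V)) (hGfin : G.Finite)
    (e : Module.End ℚ V) (heG : e ∈ G)
    (habs : ∀ f ∈ G, f ∘ₗ e = f ∧ e ∘ₗ f = f)
    (hclosed : ∀ f ∈ G, ∀ g ∈ G, f ∘ₗ g ∈ G)
    (hmemW : ∀ f ∈ G, ∀ x, f x ∈ LinearMap.range e)
    (hinj : ∀ f ∈ G, ∀ x ∈ LinearMap.range e, f x = 0 → x = 0) :
    ∀ f ∈ G, ∃ f' ∈ G, f' ∘ₗ f = e ∧ f ∘ₗ f' = e := by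
  intro f hf
  have hfpG : ∀ k, cpow f e k ∈ G := by
    intro k
    induction k with
    | zero => exact heG
    | succ k ih => exact hclosed f hf _ ih
  have hfpadd : ∀ a b, cpow f e (a + b) = cpow f e a ∘ₗ cpow f e b := by
    intro a b
    induction a with
    | zero =>
        rw [Nat.zero_add]
        exact ((habs _ (hfpG b)).2).symm
    | succ a ih =>
        have h1 : a + 1 + b = (a + b) + 1 := by omega
        rw [h1]
        show f ∘ₗ cpow f e (a + b) = (f ∘ₗ cpow f e a) ∘ₗ cpow f e b
        rw [ih, LinearMap.comp_assoc]
  -- pigeonhole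
  haveI : Finite ↥G := hGfin.to_subtype
  obtain ⟨a, b, hab, heq⟩ := Finite.exists_ne_map_eq_of_infinite
    (fun k : ℕ => (⟨cpow f e k, hfpG k⟩ : ↥G))
  have heq' : cpow f e a = cpow f e b := congrArg Subtype.val heq
  have hex : ∃ a b : ℕ, a < b ∧ cpow f e a = cpow f e b := by
    rcases Nat.lt_or_ge a b with h | h
    · exact ⟨a, b, h, heq'⟩
    · exact ⟨b, a, lt_of_le_of_ne h (Ne.symm hab), heq'.symm⟩
  obtain ⟨a', b', hab', heqab⟩ := hex
  set n : ℕ := b' - a' with hn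
  have hn1 : 1 ≤ n := by omega
  -- cpow f e n = e
  have hfpn : cpow f e n = e := by
    apply LinearMap.ext
    intro x
    have h1 : cpow f e b' = cpow f e a' ∘ₗ cpow f e n := by
      rw [← hfpadd]
      congr 1
      omega
    have h2 : cpow f e a' ∘ₗ e = cpow f e a' := (habs _ (hfpG a')).1
    have h3 : cpow f e a' (cpow f e n x) = cpow f e a' (e x) := by
      calc cpow f e a' (cpow f e n x) = (cpow f e a' ∘ₗ cpow f e n) x := rfl
        _ = cpow f e b' x := by rw [← h1]
        _ = cpow f e a' x := by rw [← heqab]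
        _ = (cpow f e a' ∘ₗ e) x := by rw [h2]
        _ = cpow f e a' (e x) := rfl
    have hd : cpow f e n x - e x ∈ LinearMap.range e :=
      Submodule.sub_mem _ (hmemW _ (hfpG n) x) ⟨x, rfl⟩
    have h4 : cpow f e a' (cpow f e n x - e x) = 0 := by
      rw [map_sub, h3, sub_self]
    have h5 := hinj _ (hfpG a') _ hd h4
    exact sub_eq_zero.mp h5
  -- the inverse
  have hf1 : cpow f e 1 = f := by
    show f ∘ₗ e = f
    exact (habs f hf).1
  have h2 : (2 : ℕ) * n = n + n := by omega
  have hfl : cpow f e (2 * n) = e := by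
    rw [h2, hfpadd, hfpn]
    exact (habs e heG).1
  refine ⟨cpow f e (2 * n - 1), hfpG _, ?_, ?_⟩
  · have h1 : cpow f e (2 * n) = cpow f e (2 * n - 1) ∘ₗ cpow f e 1 := by
      rw [← hfpadd]
      congr 1
      omega
    rw [hf1] at h1
    rw [← h1, hfl]
  · have h1 : cpow f e (2 * n) = cpow f e 1 ∘ₗ cpow f e (2 * n - 1) := by
      rw [← hfpadd]
      congr 1
      omega
    rw [hf1] at h1
    rw [← h1, hfl]

end Inverses


set_option maxHeartbeats 2000000 in
set_option synthInstance.maxHeartbeats 1000000 in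
theorem main_decomp {A : Type*} (S : Set (List A))
    (hrecog : Recognizable S)
    (hconn : ∀ u v : List A, (leftQuot S u).Nonempty → (leftQuot S v).Nonempty →
      ∃ w : List A, leftQuot S (u ++ w) = leftQuot S v)
    (hconn' : ∀ u v : List A,
      (leftQuot (langRev S) u).Nonempty → (leftQuot (langRev S) v).Nonempty →
      ∃ w : List A, leftQuot (langRev S) (u ++ w) = leftQuot (langRev S) v)
    (hbot : synSpace (charFun S) ≠ ⊥) :
    CompletelyReducibleSeries (charFun S) := by
  classical
  haveI hFD : FiniteDimensional ℚ ↥(synSpace (charFun S)) := synSpace_fd hrecog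
  -- ### Step 1 : minimal nonzero rank
  obtain ⟨τ0, hτ0mem, hτ0ne⟩ := Submodule.exists_mem_ne_zero_of_ne_bot hbot
  have hpsinil_ne : psi (charFun S) [] ≠ 0 := by
    intro h
    apply hτ0ne
    have h0 : psi (charFun S) [] ⟨τ0, hτ0mem⟩ = 0 := by rw [h]; rfl
    rw [psi_nil] at h0
    exact congrArg Subtype.val h0
  have hNZne : ({n : ℕ | n ≠ 0 ∧ ∃ u, rho (charFun S) u = n}).Nonempty := by
    refine ⟨rho (charFun S) [], ?_, [], rfl⟩
    rw [Ne, rho_eq_zero_iff]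
    exact hpsinil_ne
  obtain ⟨hr0, w₀, hw₀⟩ := Nat.sInf_mem hNZne
  have hminr : ∀ u, rho (charFun S) u ≠ 0 → rho (charFun S) w₀ ≤ rho (charFun S) u :=
    fun u hu => hw₀ ▸ Nat.sInf_le ⟨hu, u, rfl⟩
  have hrw₀ : rho (charFun S) w₀ ≠ 0 := by rw [hw₀]; exact hr0
  -- ### Step 2 : a self-loop through a minimal-rank word
  have hpsiw₀ : psi (charFun S) w₀ ≠ 0 := by
    intro h
    exact hrw₀ ((rho_eq_zero_iff (charFun S) w₀).mpr h)
  obtain ⟨tw, hq1⟩ := exists_nonempty_quot_of_psi_ne_zero hpsiw₀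
  have hq2 : (leftQuot S tw).Nonempty := leftQuot_nonempty_of_append hq1
  obtain ⟨w₁, hw₁⟩ := hconn (tw ++ w₀) tw hq1 hq2
  rw [List.append_assoc] at hw₁
  set z₀ : List A := w₀ ++ w₁ with hz₀def
  have hloop : ∀ k, leftQuot S (tw ++ wpow z₀ k) = leftQuot S tw := by
    intro k
    induction k with
    | zero => simp [wpow]
    | succ k ih =>
        have h1 : tw ++ wpow z₀ (k + 1) = (tw ++ z₀) ++ wpow z₀ k := by
          simp [wpow, List.append_assoc]
        rw [h1, leftQuot_congr_append hw₁ (wpow z₀ k), ih]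
  -- ### Step 3 : an idempotent of minimal rank
  have hfinpsi : (Set.range (psi (charFun S))).Finite := psi_range_finite hrecog
  haveI := hfinpsi.to_subtype
  have hex : ∃ a b : ℕ, a ≠ b ∧
      psi (charFun S) (wpow z₀ a) = psi (charFun S) (wpow z₀ b) := by
    obtain ⟨a, b, hab, heq⟩ := Finite.exists_ne_map_eq_of_infinite
      (fun k : ℕ => (⟨psi (charFun S) (wpow z₀ k), Set.mem_range_self _⟩ :
        ↥(Set.range (psi (charFun S)))))
    exact ⟨a, b, hab, congrArg Subtype.val heq⟩
  have hex' : ∃ i j : ℕ, i < j ∧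
      psi (charFun S) (wpow z₀ i) = psi (charFun S) (wpow z₀ j) := by
    obtain ⟨a, b, hab, heq⟩ := hex
    rcases Nat.lt_or_ge a b with h | h
    · exact ⟨a, b, h, heq⟩
    · exact ⟨b, a, lt_of_le_of_ne h (Ne.symm hab), heq.symm⟩
  obtain ⟨i, j, hij, hijeq⟩ := hex'
  set p : ℕ := j - i with hpdef
  have hp1 : 1 ≤ p := by omega
  have hper : ∀ s, psi (charFun S) (wpow z₀ (i + p + s)) = psi (charFun S) (wpow z₀ (i + s)) := by
    intro s
    have e1 : i + p + s = j + s := by omega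
    rw [e1, wpow_add, wpow_add]
    exact psi_congr_right (charFun S) hijeq.symm (wpow z₀ s)
  have hmult : ∀ t s, psi (charFun S) (wpow z₀ (i + s + t * p)) =
      psi (charFun S) (wpow z₀ (i + s)) := by
    intro t
    induction t with
    | zero => intro s; rw [Nat.zero_mul, Nat.add_zero]
    | succ t ih =>
        intro s
        have e1 : i + s + (t + 1) * p = i + p + (s + t * p) := by ring
        have e2 : i + (s + t * p) = i + s + t * p := by ring
        rw [e1, hper (s + t * p), e2, ih s]
  set kk : ℕ := (i + 1) * p with hkkdef
  have hkk1 : i + 1 ≤ kk := Nat.le_mul_of_pos_right (i + 1) hp1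
  have hidem : psi (charFun S) (wpow z₀ (kk + kk)) = psi (charFun S) (wpow z₀ kk) := by
    have e1 : kk + kk = i + (kk - i) + (i + 1) * p := by omega
    have e2 : i + (kk - i) = kk := by omega
    rw [e1]
    rw [hmult (i + 1) (kk - i), e2]
  set z : List A := wpow z₀ kk with hzdef
  set e : Module.End ℚ ↥(synSpace (charFun S)) := psi (charFun S) z with hedef
  have he_idem : psi (charFun S) (z ++ z) = e := by rw [← wpow_add]; exact hidem
  have he2 : e ∘ₗ e = e := (psi_comp (charFun S) z z).trans he_idem
  have hloopz : leftQuot S (tw ++ z) = leftQuot S tw := hloop kk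
  have hexqs : e (xqs S tw) = xqs S tw := by
    rw [hedef, psi_xqs]
    exact Subtype.ext (xq_eq_of_leftQuot_eq hloopz)
  have hxqs_ne : xqs S tw ≠ 0 := by
    intro h
    exact xq_ne_zero_iff.mpr hq2 (congrArg Subtype.val h)
  have hene : e ≠ 0 := by
    intro h
    apply hxqs_ne
    rw [← hexqs, h, LinearMap.zero_apply]
  have hrz : rho (charFun S) z = rho (charFun S) w₀ := by
    have hle : rho (charFun S) z ≤ rho (charFun S) w₀ := by
      have hzw : z = w₀ ++ (w₁ ++ wpow z₀ (kk - 1)) := by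
        have h1 : kk = 1 + (kk - 1) := by omega
        rw [hzdef, h1, wpow_add]
        simp [wpow, hz₀def, List.append_assoc]
      rw [hzw]
      exact rho_append_le_left (charFun S) w₀ (w₁ ++ wpow z₀ (kk - 1))
    refine le_antisymm hle (hminr z ?_)
    rw [Ne, rho_eq_zero_iff]
    exact hene
  -- ### Step 4 : the corner monoid and its group structure
  set W : Submodule ℚ ↥(synSpace (charFun S)) := LinearMap.range e with hWdef
  have hWne : W ≠ ⊥ := fun h => hene (LinearMap.range_eq_bot.mp h)
  have hWfr : Module.finrank ℚ ↥W = rho (charFun S) w₀ := by rw [← hrz]; rfl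
  have hefix : ∀ x ∈ W, e x = x := by
    rintro x ⟨y, rfl⟩
    exact DFunLike.congr_fun he2 y
  set c : List A → Module.End ℚ ↥(synSpace (charFun S)) :=
    fun m => psi (charFun S) (z ++ m ++ z) with hcdef
  have hc_apply : ∀ m x, c m x = e (psi (charFun S) (z ++ m) x) :=
    fun m x => (psi_psi (charFun S) (z ++ m) z x).symm
  have hcW : ∀ m x, c m x ∈ W := by
    intro m x
    rw [hc_apply]
    exact ⟨psi (charFun S) (z ++ m) x, rfl⟩
  have habs_corner : ∀ m, c m ∘ₗ e = c m ∧ e ∘ₗ c m = c m := by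
    intro m
    constructor
    · have h1 : c m ∘ₗ e = psi (charFun S) (z ++ (z ++ m ++ z)) :=
        psi_comp (charFun S) z (z ++ m ++ z)
      have l1 : z ++ (z ++ m ++ z) = ((z ++ z) ++ m) ++ z := by
        simp [List.append_assoc]
      have l2 : psi (charFun S) (((z ++ z) ++ m) ++ z) = psi (charFun S) ((z ++ m) ++ z) :=
        psi_congr_right (charFun S) (psi_congr_right (charFun S) he_idem m) z
      rw [h1, l1, l2]
    · have h1 : e ∘ₗ c m = psi (charFun S) ((z ++ m ++ z) ++ z) :=
        psi_comp (charFun S) (z ++ m ++ z) z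
      have l1 : (z ++ m ++ z) ++ z = (z ++ m) ++ (z ++ z) := by
        simp [List.append_assoc]
      have l2 : psi (charFun S) ((z ++ m) ++ (z ++ z)) = psi (charFun S) ((z ++ m) ++ z) :=
        psi_congr_left (charFun S) he_idem (z ++ m)
      rw [h1, l1, l2]
  have he_eq_cz : e = c z := by
    have h1 : c z = psi (charFun S) ((z ++ z) ++ z) := rfl
    have h2 : psi (charFun S) ((z ++ z) ++ z) = psi (charFun S) (z ++ z) :=
      psi_congr_right (charFun S) he_idem z
    rw [h1, h2, he_idem]
  have hrange_c : ∀ m, c m ≠ 0 → LinearMap.range (c m) = W := by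
    intro m hm
    have hle : LinearMap.range (c m) ≤ W := by
      rintro x ⟨y, rfl⟩
      exact hcW m y
    have h1 : rho (charFun S) (z ++ m ++ z) ≠ 0 := by
      rw [Ne, rho_eq_zero_iff]
      exact hm
    refine Submodule.eq_of_le_of_finrank_le hle ?_
    rw [hWfr]
    exact hminr _ h1
  have hinjc : ∀ m, c m ≠ 0 → ∀ x ∈ W, c m x = 0 → x = 0 := by
    intro m hm
    set f' : ↥W →ₗ[ℚ] ↥W := (c m).restrict (fun x _ => hcW m x) with hf'def
    have hsurj : Function.Surjective f' := by
      rintro ⟨y, hy⟩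
      have : y ∈ LinearMap.range (c m) := by rw [hrange_c m hm]; exact hy
      obtain ⟨x₀, hx₀⟩ := this
      refine ⟨⟨e x₀, ⟨x₀, rfl⟩⟩, ?_⟩
      apply Subtype.ext
      show c m (e x₀) = y
      calc c m (e x₀) = (c m ∘ₗ e) x₀ := rfl
        _ = c m x₀ := by rw [(habs_corner m).1]
        _ = y := hx₀
    haveI hWfd : FiniteDimensional ℚ ↥W := FiniteDimensional.finiteDimensional_submodule W
    have hinj' : Function.Injective f' := (LinearMap.injective_iff_surjective (K := ℚ) (V := ↥W) (f := f')).mpr hsurj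
    intro x hxW hx0
    have h1 : f' ⟨x, hxW⟩ = 0 := by
      apply Subtype.ext
      exact hx0
    have h2 : (⟨x, hxW⟩ : ↥W) = 0 := by
      apply hinj'
      rw [h1, map_zero]
    exact congrArg Subtype.val h2
  set G : Set (Module.End ℚ ↥(synSpace (charFun S))) :=
    {f | f ≠ 0 ∧ ∃ m, f = c m} with hGdef
  have hGfin : G.Finite := by
    apply hfinpsi.subset
    rintro f ⟨hne, m, rfl⟩
    exact ⟨z ++ m ++ z, rfl⟩
  have heG : e ∈ G := ⟨hene, z, he_eq_cz⟩
  have habsG : ∀ f ∈ G, f ∘ₗ e = f ∧ e ∘ₗ f = f := by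
    rintro f ⟨-, m, rfl⟩
    exact habs_corner m
  have hmemWG : ∀ f ∈ G, ∀ x, f x ∈ W := by
    rintro f ⟨-, m, rfl⟩ x
    exact hcW m x
  have hinjG : ∀ f ∈ G, ∀ x ∈ W, f x = 0 → x = 0 := by
    rintro f ⟨hne, m, rfl⟩ x hxW hx0
    exact hinjc m hne x hxW hx0
  obtain ⟨y0, hy0W, hy0ne⟩ := Submodule.exists_mem_ne_zero_of_ne_bot hWne
  have hclosedG : ∀ f ∈ G, ∀ g ∈ G, f ∘ₗ g ∈ G := by
    intro f hf g hg
    obtain ⟨hfne, m, hfm⟩ := hf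
    obtain ⟨hgne, m', hgm⟩ := hg
    have hform : f ∘ₗ g = c (m' ++ z ++ z ++ m) := by
      rw [hfm, hgm, hcdef]
      have h1 : psi (charFun S) (z ++ m ++ z) ∘ₗ psi (charFun S) (z ++ m' ++ z) =
          psi (charFun S) ((z ++ m' ++ z) ++ (z ++ m ++ z)) :=
        psi_comp (charFun S) (z ++ m' ++ z) (z ++ m ++ z)
      have h2 : (z ++ m' ++ z) ++ (z ++ m ++ z) = z ++ (m' ++ z ++ z ++ m) ++ z := by
        simp [List.append_assoc]
      simp only
      rw [h1, h2]
    have hnz : f ∘ₗ g ≠ 0 := by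
      intro h0
      have h1 : g y0 ≠ 0 := fun hh => hy0ne (hinjG g ⟨hgne, m', hgm⟩ y0 hy0W hh)
      have h2 : g y0 ∈ W := hmemWG g ⟨hgne, m', hgm⟩ y0
      have h3 : f (g y0) ≠ 0 := fun hh => h1 (hinjG f ⟨hfne, m, hfm⟩ (g y0) h2 hh)
      apply h3
      have : (f ∘ₗ g) y0 = 0 := by rw [h0]; rfl
      exact this
    exact ⟨hnz, m' ++ z ++ z ++ m, hform⟩
  have hinvG : ∀ f ∈ G, ∃ f' ∈ G, f' ∘ₗ f = e ∧ f ∘ₗ f' = e := by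
    refine corner_inverses G hGfin e heG habsG hclosedG ?_ ?_
    · intro f hf x
      exact hmemWG f hf x
    · intro f hf x hx
      exact hinjG f hf x hx
  -- ### Step 5 : decomposition of W into minimal stable subspaces
  set Pstab : Submodule ℚ ↥(synSpace (charFun S)) → Prop :=
    fun Y => Y ≤ W ∧ ∀ f ∈ G, ∀ y ∈ Y, f y ∈ Y with hPstabdef
  set Mins : Set (Submodule ℚ ↥(synSpace (charFun S))) :=
    {Y | Pstab Y ∧ Y ≠ ⊥ ∧ ∀ Z, Pstab Z → Z ≠ ⊥ → Z ≤ Y → Z = Y} with hMinsdef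
  have hZstab : ∀ f ∈ G, ∀ x ∈ (⨆ Y : ↥Mins, (Y : Submodule ℚ ↥(synSpace (charFun S)))),
      f x ∈ (⨆ Y : ↥Mins, (Y : Submodule ℚ ↥(synSpace (charFun S)))) := by
    intro f hf x hx
    refine Submodule.iSup_induction _ (motive := fun x =>
      f x ∈ (⨆ Y : ↥Mins, (Y : Submodule ℚ ↥(synSpace (charFun S))))) hx ?_ ?_ ?_
    · intro Y x' hx'
      exact le_iSup (fun Y : ↥Mins => (Y : Submodule ℚ ↥(synSpace (charFun S)))) Y
        (Y.2.1.2 f hf x' hx')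
    · show f 0 ∈ _
      rw [map_zero]; exact Submodule.zero_mem _
    · intro a b ha hb
      show f (a + b) ∈ _
      rw [map_add]; exact Submodule.add_mem _ ha hb
  have hZle : (⨆ Y : ↥Mins, (Y : Submodule ℚ ↥(synSpace (charFun S)))) ≤ W :=
    iSup_le fun Y => Y.2.1.1
  obtain ⟨C, hCW, hCstab, hCZbot, hCZsup⟩ :=
    corner_maschke G hGfin e heG habsG hclosedG hinvG _ hZle hZstab
  have hC0 : C = ⊥ := by
    by_contra hCne
    obtain ⟨Ymin, hYminle, hPmin, hnemin, hminim⟩ :=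
      exists_minimal_submodule Pstab C ⟨hCW, hCstab⟩ hCne
    have hYmem : Ymin ∈ Mins := ⟨hPmin, hnemin, hminim⟩
    have h1 : Ymin ≤ (⨆ Y : ↥Mins, (Y : Submodule ℚ ↥(synSpace (charFun S)))) :=
      le_iSup (fun Y : ↥Mins => (Y : Submodule ℚ ↥(synSpace (charFun S)))) ⟨Ymin, hYmem⟩
    have h2 : Ymin ≤ ⊥ := by
      rw [← hCZbot]
      exact le_inf h1 hYminle
    exact hnemin (le_bot_iff.mp h2)
  have hWZ : (⨆ Y : ↥Mins, (Y : Submodule ℚ ↥(synSpace (charFun S)))) = W := by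
    rw [hC0, sup_bot_eq] at hCZsup
    exact hCZsup
  -- ### Step 6 : (H2) the corner detects every nonzero vector
  have hH2 : ∀ x : ↥(synSpace (charFun S)), x ≠ 0 →
      ∃ m, e (psi (charFun S) m x) ≠ 0 := by
    intro x hx
    obtain ⟨t, ht⟩ : ∃ t, (x : List A → ℚ) t ≠ 0 := by
      by_contra hc; push_neg at hc
      exact hx (Subtype.ext (funext hc))
    obtain ⟨u₁, hu₁⟩ : ∃ u₁, u₁ ++ t ∈ S := by
      by_contra hc; push_neg at hc
      apply ht
      refine eval_zero_of (σ := charFun S) (t := t) (fun u => ?_) (x : List A → ℚ) x.2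
      show charFun S (u ++ t) = 0
      exact charFun_not_mem (hc u)
    obtain ⟨v₀, hv₀⟩ : (leftQuot S (tw ++ z)).Nonempty := by rw [hloopz]; exact hq2
    have hv₀S : (tw ++ z) ++ v₀ ∈ S := mem_leftQuot.1 hv₀
    have hne1 : (leftQuot (langRev S) ((z ++ v₀).reverse)).Nonempty := by
      refine ⟨tw.reverse, ?_⟩
      show (((z ++ v₀).reverse ++ tw.reverse)).reverse ∈ S
      have h1 : (((z ++ v₀).reverse ++ tw.reverse)).reverse = tw ++ (z ++ v₀) := by simp
      rw [h1, ← List.append_assoc]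
      exact hv₀S
    have hne2 : (leftQuot (langRev S) t.reverse).Nonempty := by
      refine ⟨u₁.reverse, ?_⟩
      show ((t.reverse ++ u₁.reverse)).reverse ∈ S
      have h1 : ((t.reverse ++ u₁.reverse)).reverse = u₁ ++ t := by simp
      rw [h1]
      exact hu₁
    obtain ⟨w, hw⟩ := hconn' ((z ++ v₀).reverse) t.reverse hne1 hne2
    have hcol : ∀ u : List A, shiftOp u (charFun S) (w.reverse ++ (z ++ v₀)) =
        shiftOp u (charFun S) t := by
      intro u
      show charFun S (u ++ (w.reverse ++ (z ++ v₀))) = charFun S (u ++ t)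
      apply charFun_eq_of_iff
      have h1 := Set.ext_iff.mp hw u.reverse
      have h2 : ((((z ++ v₀).reverse ++ w) ++ u.reverse)).reverse =
          u ++ (w.reverse ++ (z ++ v₀)) := by simp
      have h3 : ((t.reverse ++ u.reverse)).reverse = u ++ t := by simp
      constructor
      · intro hmem
        have h4 : u.reverse ∈ leftQuot (langRev S) ((z ++ v₀).reverse ++ w) := by
          show ((((z ++ v₀).reverse ++ w) ++ u.reverse)).reverse ∈ S
          rw [h2]; exact hmem
        have h5 : ((t.reverse ++ u.reverse)).reverse ∈ S := h1.mp h4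
        rwa [h3] at h5
      · intro hmem
        have h5 : u.reverse ∈ leftQuot (langRev S) t.reverse := by
          show ((t.reverse ++ u.reverse)).reverse ∈ S
          rw [h3]; exact hmem
        have h4 : ((((z ++ v₀).reverse ++ w) ++ u.reverse)).reverse ∈ S := h1.mpr h5
        rwa [h2] at h4
    have heval : (x : List A → ℚ) (w.reverse ++ (z ++ v₀)) = (x : List A → ℚ) t :=
      eval_eq_of hcol ↑x x.2
    refine ⟨w.reverse, fun h0 => ht ?_⟩
    rw [← heval]
    have h5 : (e (psi (charFun S) w.reverse x) : List A → ℚ) v₀ =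
        (x : List A → ℚ) (w.reverse ++ (z ++ v₀)) := by
      have h6 : e (psi (charFun S) w.reverse x) = psi (charFun S) (w.reverse ++ z) x :=
        psi_psi (charFun S) w.reverse z x
      rw [h6, psi_apply_apply, List.append_assoc]
    rw [← h5, h0]
    rfl
  -- ### Step 7 : (H1) the images of W span everything
  have hH1 : (⨆ u : List A, Submodule.map (psi (charFun S) u) W) = ⊤ := by
    apply le_antisymm le_top
    rw [← span_xqs_eq_top S, Submodule.span_le]
    rintro x1 ⟨t, rfl⟩
    refine SetLike.mem_coe.mpr ?_
    rcases Set.eq_empty_or_nonempty (leftQuot S t) with hemp | hnet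
    · have h0 : xqs S t = 0 := Subtype.ext (xq_eq_zero_of_not_nonempty
        (by rw [hemp]; exact Set.not_nonempty_empty))
      rw [h0]
      exact Submodule.zero_mem _
    · obtain ⟨w, hw⟩ := hconn tw t hq2 hnet
      have hxqW : xqs S tw ∈ W := ⟨xqs S tw, hexqs⟩
      have h0 : xqs S t = psi (charFun S) w (xqs S tw) := by
        rw [psi_xqs]
        exact Subtype.ext (xq_eq_of_leftQuot_eq hw).symm
      refine Submodule.mem_iSup_of_mem w ?_
      rw [h0]
      exact Submodule.mem_map_of_mem hxqW
  -- ### Step 8 : the simple invariant subspaces generated by minimal stable subspaces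
  set Inv : Submodule ℚ ↥(synSpace (charFun S)) → Prop :=
    fun q => ∀ u, ∀ x ∈ q, psi (charFun S) u x ∈ q with hInvdef
  set AY : Submodule ℚ ↥(synSpace (charFun S)) → Submodule ℚ ↥(synSpace (charFun S)) :=
    fun Y => ⨆ u : List A, Submodule.map (psi (charFun S) u) Y with hAYdef
  have hAY_inv : ∀ Y, Inv (AY Y) := by
    intro Y u x hx
    refine Submodule.iSup_induction _ (motive := fun x => psi (charFun S) u x ∈ AY Y) hx ?_ ?_ ?_
    · rintro u' x' ⟨y, hy, rfl⟩
      rw [psi_psi (charFun S) u' u y]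
      exact Submodule.mem_iSup_of_mem (u' ++ u) (Submodule.mem_map_of_mem hy)
    · show psi (charFun S) u 0 ∈ _
      rw [map_zero]; exact Submodule.zero_mem _
    · intro a b ha hb
      show psi (charFun S) u (a + b) ∈ _
      rw [map_add]; exact Submodule.add_mem _ ha hb
  have hAY_le : ∀ Y, Y ≤ AY Y := by
    intro Y
    refine le_trans ?_ (le_iSup _ ([] : List A))
    rw [psi_nil, Submodule.map_id]
  have hAY_compress : ∀ Y, Pstab Y → ∀ x ∈ AY Y, e x ∈ Y := by
    intro Y hYst x hx
    refine Submodule.iSup_induction _ (motive := fun x => e x ∈ Y) hx ?_ ?_ ?_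
    · rintro u x' ⟨y, hy, rfl⟩
      have h1 : e (psi (charFun S) u y) = psi (charFun S) (u ++ z) y :=
        psi_psi (charFun S) u z y
      have h2 : e y = y := hefix y (hYst.1 hy)
      have h3 : psi (charFun S) (u ++ z) y = c u y := by
        calc psi (charFun S) (u ++ z) y = psi (charFun S) (u ++ z) (e y) := by rw [h2]
          _ = psi (charFun S) (u ++ z) (psi (charFun S) z y) := rfl
          _ = psi (charFun S) (z ++ (u ++ z)) y := psi_psi (charFun S) z (u ++ z) y
          _ = c u y := by rw [← List.append_assoc]
      rw [h1, h3]
      by_cases hcu : c u = 0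
      · rw [hcu]
        exact Submodule.zero_mem _
      · exact hYst.2 (c u) ⟨hcu, u, rfl⟩ y hy
    · show e 0 ∈ _
      rw [map_zero]; exact Submodule.zero_mem _
    · intro a b ha hb
      show e (a + b) ∈ _
      rw [map_add]; exact Submodule.add_mem _ ha hb
  have hsimpleAY : ∀ Y, Y ∈ Mins → Inv (AY Y) ∧ AY Y ≠ ⊥ ∧
      ∀ q ≤ AY Y, Inv q → q = ⊥ ∨ q = AY Y := by
    intro Y hY
    obtain ⟨hYst, hYne, hYmin⟩ := hY
    refine ⟨hAY_inv Y, ?_, ?_⟩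
    · intro h0
      apply hYne
      rw [eq_bot_iff]
      exact le_trans (hAY_le Y) (le_of_eq h0)
    · intro q hqle hqInv
      by_cases hq0 : q = ⊥
      · exact Or.inl hq0
      refine Or.inr ?_
      obtain ⟨x, hxq, hxne⟩ := Submodule.exists_mem_ne_zero_of_ne_bot hq0
      obtain ⟨m, hm⟩ := hH2 x hxne
      have hMeqne : Submodule.map e q ≠ ⊥ := by
        intro h0
        apply hm
        have h1 : e (psi (charFun S) m x) ∈ Submodule.map e q :=
          Submodule.mem_map_of_mem (hqInv m x hxq)
        rw [h0] at h1
        exact (Submodule.mem_bot _).mp h1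
      have hMeqle : Submodule.map e q ≤ Y := by
        rintro _ ⟨x', hx', rfl⟩
        exact hAY_compress Y hYst x' (hqle hx')
      have hMeqstab : Pstab (Submodule.map e q) := by
        refine ⟨le_trans hMeqle hYst.1, ?_⟩
        rintro f ⟨hfne, m', rfl⟩ y hy
        obtain ⟨x', hx', rfl⟩ := hy
        have h1 : c m' (e x') = e (psi (charFun S) (z ++ m') (e x')) := hc_apply m' (e x')
        have h2 : e x' ∈ q := hqInv z x' hx'
        have h3 : psi (charFun S) (z ++ m') (e x') ∈ q := hqInv (z ++ m') _ h2
        rw [h1]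
        exact Submodule.mem_map_of_mem h3
      have hMeqY : Submodule.map e q = Y := hYmin _ hMeqstab hMeqne hMeqle
      have hAYle : AY Y ≤ q := by
        rw [← hMeqY]
        refine iSup_le fun u => ?_
        rw [← Submodule.map_comp]
        have h4 : psi (charFun S) u ∘ₗ e = psi (charFun S) (z ++ u) :=
          psi_comp (charFun S) z u
        rw [h4]
        rintro _ ⟨x', hx', rfl⟩
        exact hqInv (z ++ u) x' hx'
      exact le_antisymm hqle hAYle
  -- ### Step 9 : the simple subspaces span everything
  have htotal : (⨆ Y : ↥Mins, AY ↑Y) = ⊤ := by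
    rw [eq_top_iff, ← hH1]
    refine iSup_le fun u => ?_
    rw [← hWZ, Submodule.map_iSup]
    refine iSup_le fun Y => ?_
    refine le_trans ?_ (le_iSup (fun Y : ↥Mins => AY ↑Y) Y)
    exact le_iSup (fun u => Submodule.map (psi (charFun S) u) ↑Y) u
  -- ### Step 10 : extraction and externalization
  have hInvInf : ∀ p' q', Inv p' → Inv q' → Inv (p' ⊓ q') := by
    intro p' q' hp' hq' u x hx
    exact Submodule.mem_inf.mpr ⟨hp' u x (Submodule.mem_inf.mp hx).1,
      hq' u x (Submodule.mem_inf.mp hx).2⟩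
  have hInvSup : ∀ {ι : Type} (f : ι → Submodule ℚ ↥(synSpace (charFun S))),
      (∀ i', Inv (f i')) → Inv (⨆ i', f i') := by
    intro ι f hf u x hx
    refine Submodule.iSup_induction _ (motive := fun x => psi (charFun S) u x ∈ ⨆ i', f i')
      hx ?_ ?_ ?_
    · intro i' x' hx'
      exact Submodule.mem_iSup_of_mem i' (hf i' u x' hx')
    · show psi (charFun S) u 0 ∈ _
      rw [map_zero]; exact Submodule.zero_mem _
    · intro a b ha hb
      show psi (charFun S) u (a + b) ∈ _
      rw [map_add]; exact Submodule.add_mem _ ha hb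
  obtain ⟨n, pfam, hpfam, hindep, hsup⟩ :=
    extract_independent Inv hInvInf hInvSup (fun Y : ↥Mins => AY ↑Y)
      (fun Y => hsimpleAY ↑Y Y.2) htotal
  exact internal_to_external (charFun S) ⟨n, pfam, hpfam, hindep, hsup⟩

end Birec

open Birec

/-- **Corollary.** Any recognizable birecurrent set is completely reducible over `ℚ`:
the syntactic representation of its characteristic series is a direct sum of
irreducible representations. -/
theorem birecurrent_completelyReducible {A : Type*} [Fintype A] (S : Set (List A))
    (hS : Birecurrent S) :
    CompletelyReducibleLang S := by
  classical
  obtain ⟨⟨hrecog, hconn⟩, ⟨hrecog', hconn'⟩⟩ := hS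
  rw [CompletelyReducibleLang]
  by_cases hbot : synSpace (charFun S) = ⊥
  · refine ⟨0, Fin.elim0, fun i => i.elim0, fun i => i.elim0, ?_⟩
    rw [iSup_of_empty, hbot]
  · exact main_decomp S hrecog hconn hconn' hbot
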